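/- For the surface r(u,v) = (u cos θ cos v + γ₁(v), u cos θ sin v + γ₂(v), u sin θ) with γ'(v) = cos θ·α(v)·(-sin v, cos v), the tangent vectors satisfy ⟪r_u, r_u⟫ = 1, ⟪r_u, r_v⟫ = 0, and ⟪r_v, r_v⟫ = cos²θ·(u + α(v))², i.e. the first fundamental form is du² + β² dv² with β = cos θ·(u + α(v)). -/

import Mathlib

open Real

/-- For the surface
`r(u,v) = (u cos θ cos v + γ₁ v, u cos θ sin v + γ₂ v, u sin θ)` with
`γ'(v) = cos θ · α(v) · (-sin v, cos v)`, the tangent vectors satisfy `⟪r_u, r_u⟫ = 1`,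
`⟪r_u, r_v⟫ = 0` and `⟪r_v, r_v⟫ = cos²θ · (u + α v)²`, i.e. the first fundamental form
is `du² + β² dv²` with `β = cos θ · (u + α v)`. -/
theorem first_fundamental_form
    (θ : ℝ) (I : Set ℝ) (α γ₁ γ₂ : ℝ → ℝ)
    (hγ₁ : ∀ v ∈ I, HasDerivAt γ₁ (Real.cos θ * α v * (-Real.sin v)) v)
    (hγ₂ : ∀ v ∈ I, HasDerivAt γ₂ (Real.cos θ * α v * (Real.cos v)) v)
    (r : ℝ → ℝ → EuclideanSpace ℝ (Fin 3))
    (hr : ∀ u v, r u v =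
      ![u * Real.cos θ * Real.cos v + γ₁ v, u * Real.cos θ * Real.sin v + γ₂ v,
        u * Real.sin θ]) :
    ∀ u : ℝ, ∀ v ∈ I,
      (inner ℝ (deriv (fun t => r t v) u) (deriv (fun t => r t v) u) : ℝ) = 1 ∧
      (inner ℝ (deriv (fun t => r t v) u) (deriv (fun t => r u t) v) : ℝ) = 0 ∧
      (inner ℝ (deriv (fun t => r u t) v) (deriv (fun t => r u t) v) : ℝ) =
        Real.cos θ ^ 2 * (u + α v) ^ 2 := by
  intro u v hv
  set e := (EuclideanSpace.equiv (Fin 3) ℝ).symm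
  have hru : HasDerivAt (fun t => r t v)
      (e ![Real.cos θ * Real.cos v, Real.cos θ * Real.sin v, Real.sin θ]) u := by
    have h1 : HasDerivAt (fun t : ℝ =>
        (![t * Real.cos θ * Real.cos v + γ₁ v, t * Real.cos θ * Real.sin v + γ₂ v,
          t * Real.sin θ] : Fin 3 → ℝ))
        ![Real.cos θ * Real.cos v, Real.cos θ * Real.sin v, Real.sin θ] u := by
      apply hasDerivAt_pi.mpr
      intro i
      fin_cases i <;> simp only [Matrix.cons_val_zero, Matrix.cons_val_one, Matrix.head_cons,
        Matrix.cons_val_two, Matrix.tail_cons]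
      · simpa [mul_assoc] using ((hasDerivAt_id u).mul_const (Real.cos θ * Real.cos v)).add_const (γ₁ v)
      · simpa [mul_assoc] using ((hasDerivAt_id u).mul_const (Real.cos θ * Real.sin v)).add_const (γ₂ v)
      · simpa using (hasDerivAt_id u).mul_const (Real.sin θ)
    have := e.toContinuousLinearMap.hasFDerivAt.comp_hasDerivAt u h1
    refine this.congr_of_eventuallyEq (Filter.Eventually.of_forall fun t => ?_)
    exact WithLp.ofLp_injective 2 (hr t v)
  have hrv : HasDerivAt (fun t => r u t)
      (e ![u * Real.cos θ * (-Real.sin v) + Real.cos θ * α v * (-Real.sin v),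
          u * Real.cos θ * Real.cos v + Real.cos θ * α v * Real.cos v, 0]) v := by
    have h1 : HasDerivAt (fun t : ℝ =>
        (![u * Real.cos θ * Real.cos t + γ₁ t, u * Real.cos θ * Real.sin t + γ₂ t,
          u * Real.sin θ] : Fin 3 → ℝ))
        ![u * Real.cos θ * (-Real.sin v) + Real.cos θ * α v * (-Real.sin v),
          u * Real.cos θ * Real.cos v + Real.cos θ * α v * Real.cos v, 0] v := by
      apply hasDerivAt_pi.mpr
      intro i
      fin_cases i <;> simp only [Matrix.cons_val_zero, Matrix.cons_val_one, Matrix.head_cons,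
        Matrix.cons_val_two, Matrix.tail_cons]
      · exact ((Real.hasDerivAt_cos v).const_mul (u * Real.cos θ)).add (hγ₁ v hv)
      · exact ((Real.hasDerivAt_sin v).const_mul (u * Real.cos θ)).add (hγ₂ v hv)
      · exact hasDerivAt_const v (u * Real.sin θ)
    have := e.toContinuousLinearMap.hasFDerivAt.comp_hasDerivAt v h1
    refine this.congr_of_eventuallyEq (Filter.Eventually.of_forall fun t => ?_)
    exact WithLp.ofLp_injective 2 (hr u t)
  rw [hru.deriv, hrv.deriv]
  have hs := Real.sin_sq_add_cos_sq v
  have ht := Real.sin_sq_add_cos_sq θ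
  have happ : ∀ (x : Fin 3 → ℝ) (i : Fin 3), (e x) i = x i := fun x i => rfl
  refine ⟨?_, ?_, ?_⟩ <;>
    simp only [PiLp.inner_apply, Fin.sum_univ_three, RCLike.inner_apply, conj_trivial, happ,
      Matrix.cons_val_zero, Matrix.cons_val_one, Matrix.head_cons, Matrix.cons_val_two,
      Matrix.tail_cons] <;>
    nlinarith [hs, ht]
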